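/- Let x be an n×n real matrix such that 1 − x/2 and 1 + x/2 are invertible. Then the Cayley map is Fréchet differentiable at x, and its derivative is given by the right-trivialized tangent: for every n×n real matrix y, D cay(x)(y) = dcay_x(y) · cay(x), where dcay_x(y) := (1 − x/2)⁻¹ · y · (1 + x/2)⁻¹. Moreover, the linear map y ↦ (1 − x/2) · y · (1 + x/2) is a two-sided inverse of the linear map dcay_x on Matrix(n,ℝ). -/

import Mathlib

attribute [local instance] Matrix.normedAddCommGroup Matrix.normedSpace

section Aux

variable {n : ℕ}

private lemma diff_entry {E : Type*} [NormedAddCommGroup E] [NormedSpace ℝ E]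
    {f : E → Matrix (Fin n) (Fin n) ℝ} (hf : Differentiable ℝ f) (i j : Fin n) :
    Differentiable ℝ fun y => f y i j :=
  differentiable_pi.mp (differentiable_pi.mp hf i) j

private lemma diff_det {E : Type*} [NormedAddCommGroup E] [NormedSpace ℝ E]
    {f : E → Matrix (Fin n) (Fin n) ℝ} (hf : Differentiable ℝ f) :
    Differentiable ℝ fun y => (f y).det := by
  simp only [Matrix.det_apply']
  refine Differentiable.fun_sum fun σ _ => Differentiable.const_mul ?_ _
  intro y
  exact (HasFDerivAt.finset_prod
    (fun i _ => ((diff_entry hf (σ i) i) y).hasFDerivAt)).differentiableAt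

private lemma diff_adjugate {E : Type*} [NormedAddCommGroup E] [NormedSpace ℝ E]
    {f : E → Matrix (Fin n) (Fin n) ℝ} (hf : Differentiable ℝ f) :
    Differentiable ℝ fun y => (f y).adjugate := by
  refine differentiable_pi.mpr ?_
  intro i
  rw [differentiable_pi]
  intro j
  simp only [Matrix.adjugate_apply]
  apply diff_det
  refine differentiable_pi.mpr ?_
  intro k
  rw [differentiable_pi]
  intro l
  simp only [Matrix.updateRow_apply]
  by_cases hk : k = j
  · simp [hk]
  · simpa [hk] using diff_entry hf k l

private lemma diffAt_inv {E : Type*} [NormedAddCommGroup E] [NormedSpace ℝ E]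
    {f : E → Matrix (Fin n) (Fin n) ℝ} (hf : Differentiable ℝ f) {x : E}
    (h : IsUnit (f x)) : DifferentiableAt ℝ (fun y => (f y)⁻¹) x := by
  simp only [Matrix.inv_def, Ring.inverse_eq_inv']
  have hd : (f x).det ≠ 0 := ((f x).isUnit_iff_isUnit_det.mp h).ne_zero
  exact (((diff_det hf) x).inv hd).smul ((diff_adjugate hf) x)

/-- Matrix multiplication as a continuous bilinear map. -/
private noncomputable def mulCLM :
    Matrix (Fin n) (Fin n) ℝ →L[ℝ] Matrix (Fin n) (Fin n) ℝ →L[ℝ] Matrix (Fin n) (Fin n) ℝ :=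
  LinearMap.toContinuousLinearMap
    ((LinearMap.toContinuousLinearMap :
        (Matrix (Fin n) (Fin n) ℝ →ₗ[ℝ] Matrix (Fin n) (Fin n) ℝ) ≃ₗ[ℝ]
        (Matrix (Fin n) (Fin n) ℝ →L[ℝ] Matrix (Fin n) (Fin n) ℝ)).toLinearMap.comp
      (LinearMap.mul ℝ (Matrix (Fin n) (Fin n) ℝ)))

@[simp] private lemma mulCLM_apply (a b : Matrix (Fin n) (Fin n) ℝ) :
    mulCLM a b = a * b := by
  simp [mulCLM]

private lemma hasFDerivAt_matmul {E : Type*} [NormedAddCommGroup E] [NormedSpace ℝ E]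
    {f g : E → Matrix (Fin n) (Fin n) ℝ} {f' g' : E →L[ℝ] Matrix (Fin n) (Fin n) ℝ} {x : E}
    (hf : HasFDerivAt f f' x) (hg : HasFDerivAt g g' x) :
    HasFDerivAt (fun y => f y * g y)
      ((show Matrix (Fin n) (Fin n) ℝ →L[ℝ] Matrix (Fin n) (Fin n) ℝ from mulCLM.flip (g x)).comp f' + (mulCLM (f x)).comp g') x := by
  have h := (mulCLM.isBoundedBilinearMap.hasFDerivAt (f x, g x)).comp x (hf.prodMk hg)
  refine h.congr_fderiv ?_
  ext y
  simp [IsBoundedBilinearMap.deriv_apply]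
  exact add_comm _ _

end Aux

/-- The Cayley map `cay(x) = (1 − x/2)⁻¹ (1 + x/2)` on square matrices. -/
noncomputable def cay {n : ℕ} (x : Matrix (Fin n) (Fin n) ℝ) :
    Matrix (Fin n) (Fin n) ℝ :=
  (1 - (2⁻¹ : ℝ) • x)⁻¹ * (1 + (2⁻¹ : ℝ) • x)

theorem cayley_fderiv_right_trivialized
    {n : ℕ} (x : Matrix (Fin n) (Fin n) ℝ)
    (h₁ : IsUnit (1 - (2⁻¹ : ℝ) • x)) (h₂ : IsUnit (1 + (2⁻¹ : ℝ) • x)) :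
    (∃ D : Matrix (Fin n) (Fin n) ℝ →L[ℝ] Matrix (Fin n) (Fin n) ℝ,
      HasFDerivAt cay D x ∧
      ∀ y, D y = ((1 - (2⁻¹ : ℝ) • x)⁻¹ * y * (1 + (2⁻¹ : ℝ) • x)⁻¹) * cay x)
    ∧ (∀ y : Matrix (Fin n) (Fin n) ℝ,
        (1 - (2⁻¹ : ℝ) • x)
            * ((1 - (2⁻¹ : ℝ) • x)⁻¹ * y * (1 + (2⁻¹ : ℝ) • x)⁻¹)
            * (1 + (2⁻¹ : ℝ) • x) = y
        ∧ (1 - (2⁻¹ : ℝ) • x)⁻¹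
            * ((1 - (2⁻¹ : ℝ) • x) * y * (1 + (2⁻¹ : ℝ) • x))
            * (1 + (2⁻¹ : ℝ) • x)⁻¹ = y) := by
  classical
  set A : Matrix (Fin n) (Fin n) ℝ := 1 - (2⁻¹ : ℝ) • x with hA
  set B : Matrix (Fin n) (Fin n) ℝ := 1 + (2⁻¹ : ℝ) • x with hB
  have hdA : IsUnit A.det := A.isUnit_iff_isUnit_det.mp h₁
  have hdB : IsUnit B.det := B.isUnit_iff_isUnit_det.mp h₂
  have hAAi : A * A⁻¹ = 1 := Matrix.mul_nonsing_inv A hdA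
  have hAiA : A⁻¹ * A = 1 := Matrix.nonsing_inv_mul A hdA
  have hBBi : B * B⁻¹ = 1 := Matrix.mul_nonsing_inv B hdB
  have hBiB : B⁻¹ * B = 1 := Matrix.nonsing_inv_mul B hdB
  have hcomm : A * B = B * A := by
    have h2 : Commute ((2⁻¹ : ℝ) • x) ((2⁻¹ : ℝ) • x) :=
      ((Commute.refl x).smul_left _).smul_right _
    exact (((Commute.one_left _).sub_left
      ((Commute.one_right _).add_right h2)) : Commute A B).eq
  have hBiAi : B⁻¹ * A⁻¹ = A⁻¹ * B⁻¹ := by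
    rw [← Matrix.mul_inv_rev, ← Matrix.mul_inv_rev, hcomm]
  constructor
  · -- differentiability
    have hAf : Differentiable ℝ (fun y : Matrix (Fin n) (Fin n) ℝ => 1 - (2⁻¹ : ℝ) • y) :=
      (differentiable_const _).sub (differentiable_id.fun_const_smul _)
    have hf : DifferentiableAt ℝ (fun y : Matrix (Fin n) (Fin n) ℝ => (1 - (2⁻¹ : ℝ) • y)⁻¹) x :=
      diffAt_inv hAf h₁
    set D0 := fderiv ℝ (fun y : Matrix (Fin n) (Fin n) ℝ => (1 - (2⁻¹ : ℝ) • y)⁻¹) x with hD0def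
    have hD0 : HasFDerivAt (fun y : Matrix (Fin n) (Fin n) ℝ => (1 - (2⁻¹ : ℝ) • y)⁻¹) D0 x := hf.hasFDerivAt
    have hA' : HasFDerivAt (fun y : Matrix (Fin n) (Fin n) ℝ => 1 - (2⁻¹ : ℝ) • y)
        ((0 : Matrix (Fin n) (Fin n) ℝ →L[ℝ] Matrix (Fin n) (Fin n) ℝ) - (2⁻¹ : ℝ) • ContinuousLinearMap.id ℝ (Matrix (Fin n) (Fin n) ℝ)) x :=
      (hasFDerivAt_const (1 : Matrix (Fin n) (Fin n) ℝ) x).sub ((hasFDerivAt_id x).const_smul (2⁻¹ : ℝ))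
    have hB' : HasFDerivAt (fun y : Matrix (Fin n) (Fin n) ℝ => 1 + (2⁻¹ : ℝ) • y)
        ((0 : Matrix (Fin n) (Fin n) ℝ →L[ℝ] Matrix (Fin n) (Fin n) ℝ) + (2⁻¹ : ℝ) • ContinuousLinearMap.id ℝ (Matrix (Fin n) (Fin n) ℝ)) x :=
      (hasFDerivAt_const (1 : Matrix (Fin n) (Fin n) ℝ) x).add ((hasFDerivAt_id x).const_smul (2⁻¹ : ℝ))
    -- implicit differentiation of f y * (1 - 2⁻¹ • y) = 1 near x
    have hg := hasFDerivAt_matmul hD0 hA'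
    have hdetC : ContinuousAt (fun y : Matrix (Fin n) (Fin n) ℝ => (1 - (2⁻¹ : ℝ) • y).det) x :=
      (diff_det hAf).continuous.continuousAt
    have hnz : (1 - (2⁻¹ : ℝ) • x).det ≠ 0 := hdA.ne_zero
    have hev : (fun y : Matrix (Fin n) (Fin n) ℝ => (1 - (2⁻¹ : ℝ) • y)⁻¹ * (1 - (2⁻¹ : ℝ) • y))
        =ᶠ[nhds x] (fun _ => (1 : Matrix (Fin n) (Fin n) ℝ)) :=
      (hdetC.eventually_ne hnz).mono fun y hy =>
        Matrix.nonsing_inv_mul _ (isUnit_iff_ne_zero.mpr hy)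
    have hzero : HasFDerivAt
        (fun y : Matrix (Fin n) (Fin n) ℝ => (1 - (2⁻¹ : ℝ) • y)⁻¹ * (1 - (2⁻¹ : ℝ) • y))
        (0 : Matrix (Fin n) (Fin n) ℝ →L[ℝ] Matrix (Fin n) (Fin n) ℝ) x :=
      hev.hasFDerivAt_iff.mpr (hasFDerivAt_const (1 : Matrix (Fin n) (Fin n) ℝ) x)
    have hGeq := hg.unique hzero
    have hD0y : ∀ y : Matrix (Fin n) (Fin n) ℝ, D0 y = (2⁻¹ : ℝ) • (A⁻¹ * y * A⁻¹) := by
      intro y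
      have h0 := DFunLike.congr_fun hGeq y
      change D0 y * A + A⁻¹ * (((0 : Matrix (Fin n) (Fin n) ℝ →L[ℝ] Matrix (Fin n) (Fin n) ℝ) - (2⁻¹ : ℝ) • ContinuousLinearMap.id ℝ (Matrix (Fin n) (Fin n) ℝ)) y) = 0 at h0
      simp only [ContinuousLinearMap.add_apply, ContinuousLinearMap.comp_apply,
        ContinuousLinearMap.flip_apply, mulCLM_apply, ContinuousLinearMap.sub_apply,
        ContinuousLinearMap.zero_apply, ContinuousLinearMap.smul_apply,
        ContinuousLinearMap.coe_smul', Pi.smul_apply,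
        ContinuousLinearMap.coe_id', id_eq, zero_sub, mul_neg,
        ← hA] at h0
      -- h0 : D0 y * A + -(A⁻¹ * (2⁻¹ • y)) = 0
      have h1 : D0 y * A = (2⁻¹ : ℝ) • (A⁻¹ * y) := by
        have h2 := eq_of_sub_eq_zero (by simpa [sub_eq_add_neg] using h0)
        rw [h2]
      calc D0 y = D0 y * A * A⁻¹ := by rw [mul_assoc, hAAi, mul_one]
        _ = (2⁻¹ : ℝ) • (A⁻¹ * y * A⁻¹) := by rw [h1, smul_mul_assoc]
    -- derivative of cay
    have hcay := hasFDerivAt_matmul hD0 hB'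
    refine ⟨_, hcay, ?_⟩
    intro y
    have hABsum : B + A = (2 : ℝ) • (1 : Matrix (Fin n) (Fin n) ℝ) := by
      rw [hA, hB]
      module
    have key : A⁻¹ * y * A⁻¹ * B + A⁻¹ * y = (2 : ℝ) • (A⁻¹ * y * A⁻¹) := by
      have hmul : A⁻¹ * y * A⁻¹ * (B + A) = A⁻¹ * y * A⁻¹ * B + A⁻¹ * y := by
        rw [mul_add, mul_assoc (A⁻¹ * y) A⁻¹ A, hAiA, mul_one]
      rw [← hmul, hABsum, mul_smul_comm, mul_one]
    have lhs_eq : D0 y * B + A⁻¹ * ((2⁻¹ : ℝ) • y) = A⁻¹ * y * A⁻¹ := by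
      rw [hD0y, mul_smul_comm, smul_mul_assoc, ← smul_add, key, smul_smul]
      norm_num
    have rhs_eq : (A⁻¹ * y * B⁻¹) * cay x = A⁻¹ * y * A⁻¹ := by
      show A⁻¹ * y * B⁻¹ * (A⁻¹ * B) = _
      rw [mul_assoc (A⁻¹ * y), ← mul_assoc B⁻¹, hBiAi, mul_assoc A⁻¹ B⁻¹, hBiB, mul_one]
    rw [rhs_eq, ← lhs_eq]
    change D0 y * B + A⁻¹ * (((0 : Matrix (Fin n) (Fin n) ℝ →L[ℝ] Matrix (Fin n) (Fin n) ℝ) + (2⁻¹ : ℝ) • ContinuousLinearMap.id ℝ (Matrix (Fin n) (Fin n) ℝ)) y) = _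
    simp only [ContinuousLinearMap.add_apply, ContinuousLinearMap.comp_apply,
      ContinuousLinearMap.flip_apply, mulCLM_apply,
      ContinuousLinearMap.zero_apply, ContinuousLinearMap.smul_apply,
      ContinuousLinearMap.coe_smul', Pi.smul_apply,
      ContinuousLinearMap.coe_id', id_eq, zero_add, ← hA, ← hB]
  · -- algebraic two-sided inverse
    intro y
    constructor
    · calc A * (A⁻¹ * y * B⁻¹) * B = (A * A⁻¹) * y * (B⁻¹ * B) := by noncomm_ring
        _ = y := by rw [hAAi, hBiB, one_mul, mul_one]
    · calc A⁻¹ * (A * y * B) * B⁻¹ = (A⁻¹ * A) * y * (B * B⁻¹) := by noncomm_ring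
        _ = y := by rw [hAiA, hBBi, one_mul, mul_one]
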